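/- arXiv:2105.04697 — 2 statements merged into one kernel-verified Lean document; each statement's English description precedes it below -/
import Mathlib

section
/- Let N ≥ 2 be an integer. For all v₁, v₂ ∈ [0,1] with v₁ ≥ v₂, the dual feasibility inequality (v₁^(N/(N−1)) + (N−1)·v₂^(N/(N−1)))/N ≤ v₁·v₁^(1/(N−1)) − ∫_{v₂}^{v₁} s^(1/(N−1)) ds holds, with equality for all such pairs. -/
open MeasureTheory Set

theorem stmt8 (N : ℕ) (hN : 2 ≤ N) :
    ∀ v₁ ∈ Icc (0:ℝ) 1, ∀ v₂ ∈ Icc (0:ℝ) 1, v₂ ≤ v₁ →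
      (v₁ ^ ((N:ℝ)/((N:ℝ) - 1)) + ((N:ℝ) - 1) * v₂ ^ ((N:ℝ)/((N:ℝ) - 1))) / N
          ≤ v₁ * v₁ ^ ((1:ℝ)/((N:ℝ) - 1)) - ∫ s in v₂..v₁, s ^ ((1:ℝ)/((N:ℝ) - 1))
      ∧ (v₁ ^ ((N:ℝ)/((N:ℝ) - 1)) + ((N:ℝ) - 1) * v₂ ^ ((N:ℝ)/((N:ℝ) - 1))) / N
          = v₁ * v₁ ^ ((1:ℝ)/((N:ℝ) - 1)) - ∫ s in v₂..v₁, s ^ ((1:ℝ)/((N:ℝ) - 1)) := by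
  intro v₁ h1 v₂ h2 hle
  have hN1 : (0:ℝ) < (N:ℝ) - 1 := by
    have : (2:ℝ) ≤ N := by exact_mod_cast hN
    linarith
  have hp : (0:ℝ) ≤ 1/((N:ℝ)-1) := by positivity
  have hint : (∫ s in v₂..v₁, s ^ ((1:ℝ)/((N:ℝ) - 1)))
      = (v₁ ^ ((1:ℝ)/((N:ℝ)-1) + 1) - v₂ ^ ((1:ℝ)/((N:ℝ)-1) + 1)) / ((1:ℝ)/((N:ℝ)-1) + 1) := by
    rw [integral_rpow (Or.inl (by linarith [hp] : (-1:ℝ) < 1/((N:ℝ)-1)))]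
  have hexp : (1:ℝ)/((N:ℝ)-1) + 1 = (N:ℝ)/((N:ℝ)-1) := by
    field_simp
    ring
  have hv1 : v₁ * v₁ ^ ((1:ℝ)/((N:ℝ) - 1)) = v₁ ^ ((N:ℝ)/((N:ℝ)-1)) := by
    rw [← hexp, Real.rpow_add' h1.1 (by positivity), Real.rpow_one]
    ring
  rw [hint, hexp, hv1]
  have hNne : ((N:ℝ)/((N:ℝ)-1)) ≠ 0 := by positivity
  have hNpos : (0:ℝ) < N := by positivity
  have key : (v₁ ^ ((N:ℝ)/((N:ℝ) - 1)) + ((N:ℝ) - 1) * v₂ ^ ((N:ℝ)/((N:ℝ) - 1))) / N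
      = v₁ ^ ((N:ℝ)/((N:ℝ)-1)) - (v₁ ^ ((N:ℝ)/((N:ℝ)-1)) - v₂ ^ ((N:ℝ)/((N:ℝ)-1))) / ((N:ℝ)/((N:ℝ)-1)) := by
    field_simp
    ring
  exact ⟨key.le, key⟩
end

section
/- Let F : [0,1] → [0,1] be a cumulative distribution function with F(1) = 1 and suppose the revenue function R(x) = x·(1−F(x)) is concave on [0,1]. Then 2·∫₀¹ x·(1−F(x)) dx ≥ max_{x ∈ [0,1]} x·(1−F(x)). -/
open MeasureTheory Set

theorem stmt10 (F : ℝ → ℝ)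
    (hmono : MonotoneOn F (Icc (0:ℝ) 1))
    (hrange : ∀ x ∈ Icc (0:ℝ) 1, F x ∈ Icc (0:ℝ) 1)
    (hF1 : F 1 = 1)
    (hconc : ConcaveOn ℝ (Icc (0:ℝ) 1) (fun x => x * (1 - F x))) :
    ∀ x ∈ Icc (0:ℝ) 1, x * (1 - F x) ≤ 2 * ∫ y in (0:ℝ)..1, y * (1 - F y) := by
  set R : ℝ → ℝ := fun x => x * (1 - F x) with hR
  have hR0 : R 0 = 0 := by simp [hR]
  have hR1 : R 1 = 0 := by simp [hR, hF1]
  have hRnn : ∀ x ∈ Icc (0:ℝ) 1, 0 ≤ R x := by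
    intro x hx
    have h1 := (hrange x hx).2
    exact mul_nonneg hx.1 (by linarith)
  -- integrability
  have hFG : MonotoneOn (fun y => y * F y) (Icc (0:ℝ) 1) := by
    intro a ha b hb hab
    exact mul_le_mul hab (hmono ha hb hab) (hrange a ha).1 hb.1
  have hFGint : IntervalIntegrable (fun y => y * F y) volume 0 1 := by
    apply MonotoneOn.intervalIntegrable
    rwa [Set.uIcc_of_le (by norm_num : (0:ℝ) ≤ 1)]
  have hIdint : IntervalIntegrable (fun y : ℝ => y) volume 0 1 :=
    continuous_id.intervalIntegrable 0 1
  have hRint : IntervalIntegrable R volume 0 1 := by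
    have : R = fun y => y - y * F y := by funext y; simp [hR]; ring
    rw [this]
    exact hIdint.sub hFGint
  have hInonneg : 0 ≤ ∫ y in (0:ℝ)..1, R y :=
    intervalIntegral.integral_nonneg (by norm_num) hRnn
  intro x hx
  by_cases hpos : R x ≤ 0
  · calc R x ≤ 0 := hpos
      _ ≤ 2 * ∫ y in (0:ℝ)..1, R y := by linarith
  push_neg at hpos
  have hx0 : 0 < x := by
    rcases lt_or_eq_of_le hx.1 with h | h
    · exact h
    · exfalso; rw [← h] at hpos; simp [hR0] at hpos
  have hx1 : x < 1 := by
    rcases lt_or_eq_of_le hx.2 with h | h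
    · exact h
    · exfalso; rw [h] at hpos; simp [hR1] at hpos
  -- integrability on subintervals
  have hsub1 : IntervalIntegrable R volume 0 x := by
    apply hRint.mono_set
    rw [Set.uIcc_of_le hx.1, Set.uIcc_of_le (by norm_num : (0:ℝ) ≤ 1)]
    exact Icc_subset_Icc le_rfl hx.2
  have hsub2 : IntervalIntegrable R volume x 1 := by
    apply hRint.mono_set
    rw [Set.uIcc_of_le hx.2, Set.uIcc_of_le (by norm_num : (0:ℝ) ≤ 1)]
    exact Icc_subset_Icc hx.1 le_rfl
  -- lower bounds via concavity
  have hlow1 : ∀ t ∈ Icc (0:ℝ) x, (R x / x) * t ≤ R t := by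
    intro t ht
    have hb : 0 ≤ t / x := div_nonneg ht.1 hx0.le
    have hb1 : t / x ≤ 1 := (div_le_one hx0).2 ht.2
    have := hconc.2 (x := (0:ℝ)) (y := x) (by constructor <;> norm_num) hx
      (by linarith : (0:ℝ) ≤ 1 - t / x) hb (by ring)
    simp only [smul_eq_mul, mul_zero, zero_add] at this
    have hxt : (t / x) * x = t := by field_simp
    rw [hxt] at this
    calc (R x / x) * t = (t / x) * R x := by field_simp
      _ ≤ R t := by simpa [hR0] using this
  have hlow2 : ∀ t ∈ Icc x 1, (R x / (1 - x)) * (1 - t) ≤ R t := by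
    intro t ht
    have h1x : 0 < 1 - x := by linarith
    have hb : 0 ≤ (t - x) / (1 - x) := div_nonneg (by linarith [ht.1]) h1x.le
    have ha : 0 ≤ (1 - t) / (1 - x) := div_nonneg (by linarith [ht.2]) h1x.le
    have := hconc.2 (x := x) (y := (1:ℝ)) hx (by constructor <;> norm_num)
      ha hb (by field_simp; ring)
    simp only [smul_eq_mul, mul_one] at this
    have hxt : (1 - t) / (1 - x) * x + (t - x) / (1 - x) = t := by field_simp; ring
    rw [hxt] at this
    calc (R x / (1 - x)) * (1 - t) = (1 - t) / (1 - x) * R x := by field_simp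
      _ ≤ R t := by simpa [hR1] using this
  -- integral comparisons
  have hc1 : (∫ t in (0:ℝ)..x, (R x / x) * t) ≤ ∫ t in (0:ℝ)..x, R t := by
    apply intervalIntegral.integral_mono_on hx.1
    · exact (continuous_const.mul continuous_id).intervalIntegrable 0 x
    · exact hsub1
    · exact hlow1
  have hc2 : (∫ t in x..(1:ℝ), (R x / (1 - x)) * (1 - t)) ≤ ∫ t in x..(1:ℝ), R t := by
    apply intervalIntegral.integral_mono_on hx.2
    · exact (continuous_const.mul (continuous_const.sub continuous_id)).intervalIntegrable x 1
    · exact hsub2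
    · exact hlow2
  have hv1 : (∫ t in (0:ℝ)..x, (R x / x) * t) = R x * x / 2 := by
    rw [intervalIntegral.integral_const_mul, integral_id]
    field_simp
    ring
  have hv2 : (∫ t in x..(1:ℝ), (R x / (1 - x)) * (1 - t)) = R x * (1 - x) / 2 := by
    rw [intervalIntegral.integral_const_mul]
    have : (∫ t in x..(1:ℝ), (1 - t)) = (1 - x) ^ 2 / 2 := by
      rw [intervalIntegral.integral_sub intervalIntegrable_const
        intervalIntegral.intervalIntegrable_id, integral_id, intervalIntegral.integral_const]
      simp
      ring
    rw [this]
    have h1x : (1 : ℝ) - x ≠ 0 := by linarith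
    field_simp
  have hsplit : (∫ t in (0:ℝ)..x, R t) + (∫ t in x..(1:ℝ), R t) = ∫ y in (0:ℝ)..1, R y :=
    intervalIntegral.integral_add_adjacent_intervals hsub1 hsub2
  have hmain : R x * x / 2 + R x * (1 - x) / 2 ≤ ∫ y in (0:ℝ)..1, R y := by
    rw [← hsplit, ← hv1, ← hv2]
    exact add_le_add hc1 hc2
  have heq : R x * x / 2 + R x * (1 - x) / 2 = R x / 2 := by ring
  calc x * (1 - F x) = R x := rfl
    _ ≤ 2 * ∫ y in (0:ℝ)..1, R y := by linarith
end
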